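/- arXiv:1411.5526 — 3 statements merged into one kernel-verified Lean document; each statement's English description precedes it below -/
import Mathlib

section
/- Let R be a ring and let f : X → Y be a morphism of ℕ-indexed chain complexes of R-modules (differentials lowering degree by one). If f is a quasi-isomorphism and f_n : X_n → Y_n is surjective for every n ≥ 1, then f_0 is also surjective; hence f is degreewise surjective. (This is the claim that trivial fibrations in the category of non-negatively graded chain complexes are fibrations in the category of unbounded complexes, where fibrations of unbounded complexes are the degreewise surjections.) -/
open CategoryTheory

universe v u

lemma moduleCat_comp_apply_aux {R : Type u} [Ring R] {A B C : ModuleCat.{v} R}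
    (f : A ⟶ B) (g : B ⟶ C) (x : A) : (f ≫ g) x = g (f x) := rfl

lemma shortComplex_tau₂_surjective_aux {R : Type u} [Ring R]
    {S₁ S₂ : ShortComplex (ModuleCat.{v} R)} (φ : S₁ ⟶ S₂)
    (hepi : Epi (ShortComplex.homologyMap φ))
    (hg : S₂.g = 0) (h₁ : Function.Surjective φ.τ₁) :
    Function.Surjective φ.τ₂ := by
  intro y
  have hy : y ∈ LinearMap.ker S₂.g.hom := by rw [LinearMap.mem_ker, hg]; rfl
  set cy : S₂.cycles := S₂.moduleCatCyclesIso.inv ⟨y, hy⟩ with hcy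
  -- The composite `S₁.cycles → S₁.homology → S₂.homology` is surjective.
  have hsurj : Function.Surjective (S₁.homologyπ ≫ ShortComplex.homologyMap φ) := by
    rw [← ModuleCat.epi_iff_surjective]
    infer_instance
  obtain ⟨cx, hcx⟩ := hsurj (S₂.homologyπ cy)
  rw [ShortComplex.homologyπ_naturality φ, moduleCat_comp_apply_aux] at hcx
  -- transfer to the concrete homology
  have e3 : S₂.moduleCatCyclesIso.hom cy = ⟨y, hy⟩ := by
    rw [hcy]
    exact Iso.inv_hom_id_apply _ _
  have p : ∀ c : S₂.cycles, S₂.moduleCatHomologyIso.hom (S₂.homologyπ c)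
      = S₂.moduleCatLeftHomologyData.π (S₂.moduleCatCyclesIso.hom c) :=
    fun c => S₂.π_moduleCatCyclesIso_hom_apply c
  have hq : S₂.moduleCatLeftHomologyData.π (S₂.moduleCatCyclesIso.hom (ShortComplex.cyclesMap φ cx)) =
      S₂.moduleCatLeftHomologyData.π (⟨y, hy⟩ : LinearMap.ker S₂.g.hom) := by
    rw [← e3, ← p, ← p, hcx]
  -- hence the difference is a boundary
  have hq' : (Submodule.Quotient.mk (S₂.moduleCatCyclesIso.hom (ShortComplex.cyclesMap φ cx)) :
      LinearMap.ker S₂.g.hom ⧸ LinearMap.range S₂.moduleCatToCycles) = Submodule.Quotient.mk ⟨y, hy⟩ := hq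
  replace hq' := (Submodule.Quotient.eq _).mp hq'
  obtain ⟨w, hw⟩ := hq'
  obtain ⟨w₁, rfl⟩ := h₁ w
  have hw' := congrArg (Subtype.val) hw
  replace hw' : _ = (S₂.moduleCatCyclesIso.hom (ShortComplex.cyclesMap φ cx)).val - y := hw'
  -- identify the values
  have hval : (S₂.moduleCatCyclesIso.hom (ShortComplex.cyclesMap φ cx)).val =
      φ.τ₂ (S₁.iCycles cx) := by
    have e : (S₂.moduleCatCyclesIso.hom (ShortComplex.cyclesMap φ cx)).val
        = S₂.iCycles (ShortComplex.cyclesMap φ cx) :=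
      S₂.moduleCatCyclesIso_hom_i_apply (ShortComplex.cyclesMap φ cx)
    rw [e]
    exact ConcreteCategory.congr_hom (ShortComplex.cyclesMap_i φ) cx
  have hcomm : S₂.f (φ.τ₁ w₁) = φ.τ₂ (S₁.f w₁) := by
    rw [← moduleCat_comp_apply_aux, φ.comm₁₂, moduleCat_comp_apply_aux]
  have hmtc : ((S₂.moduleCatToCycles (φ.τ₁ w₁)) : S₂.X₂) = S₂.f (φ.τ₁ w₁) := rfl
  refine ⟨S₁.iCycles cx - S₁.f w₁, ?_⟩
  rw [map_sub, ← hval, ← hcomm, ← hmtc, hw']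
  abel

/-- If a morphism of `ℕ`-indexed chain complexes of `R`-modules is a quasi-isomorphism
and is surjective in every positive degree, then it is surjective in degree `0` as
well; hence it is degreewise surjective. -/
theorem degreewise_surjective_of_quasiIso_of_surjective_pos
    (R : Type u) [Ring R] {X Y : ChainComplex (ModuleCat R) ℕ} (f : X ⟶ Y)
    (hq : QuasiIso f) (hs : ∀ n : ℕ, 1 ≤ n → Function.Surjective (f.f n)) :
    ∀ n : ℕ, Function.Surjective (f.f n) := by
  intro n
  match n with
  | (m + 1) => exact hs (m + 1) (by omega)
  | 0 =>
    have hqa : QuasiIsoAt f 0 := inferInstance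
    rw [quasiIsoAt_iff] at hqa
    set φ := (HomologicalComplex.shortComplexFunctor (ModuleCat R)
      (ComplexShape.down ℕ) 0).map f with hφ
    have hepi : Epi (ShortComplex.homologyMap φ) := by
      have : IsIso (ShortComplex.homologyMap φ) := hqa.isIso'
      infer_instance
    have hg : (Y.sc 0).g = 0 := by
      apply Y.shape
      simp [ChainComplex.next_nat_zero]
    have h₁ : Function.Surjective φ.τ₁ :=
      hs ((ComplexShape.down ℕ).prev 0) (by rw [ChainComplex.prev]; omega)
    exact shortComplex_tau₂_surjective_aux φ hepi hg h₁
end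

section
/- Let k be a field of characteristic zero and let ε, δ : ℕ → {1, -1} be arbitrary sign functions. In the polynomial ring k[X], the element X does not lie in the k-linear span of the set { ε(n)·2·X^(n+2) + δ(n)·X^(n+1) : n ∈ ℕ }. (This is the computation showing that for the coalgebra X spanned by x in degree 1 and w = x⊗x in degree 2 with differential w ↦ x, the element corresponding to x survives in the homology of the cobar construction Ω_β X, so that X is not weakly equivalent to the zero coalgebra in the β-model structure, although it is in the ε-model structure.) -/
open Polynomial

universe u

/-- Over a field of characteristic zero, for arbitrary signs `ε n, δ n ∈ {1, -1}`, the
element `X` of `k[X]` does not lie in the `k`-linear span of the elements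
`ε n • (2 * X ^ (n + 2)) + δ n • X ^ (n + 1)` for `n ∈ ℕ`. -/
theorem X_not_mem_span_signs
    (k : Type u) [Field k] [CharZero k] (ε δ : ℕ → k)
    (hε : ∀ n, ε n = 1 ∨ ε n = -1) (hδ : ∀ n, δ n = 1 ∨ δ n = -1) :
    (X : k[X]) ∉ Submodule.span k
      (Set.range fun n : ℕ =>
        ε n • (2 * X ^ (n + 2)) + δ n • X ^ (n + 1) : Set k[X]) := by
  intro hmem
  rw [Finsupp.mem_span_range_iff_exists_finsupp] at hmem
  obtain ⟨c, hc⟩ := hmem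
  have hco : ∀ m : ℕ, (∑ n ∈ c.support,
      c n * (ε n * (2 * (if m = n + 2 then (1:k) else 0)) + δ n * (if m = n + 1 then (1:k) else 0)))
      = (X : k[X]).coeff m := by
    intro m
    rw [← hc, Finsupp.sum, Polynomial.finset_sum_coeff]
    refine Finset.sum_congr rfl fun n _ => ?_
    simp only [coeff_smul, coeff_add, coeff_X_pow, smul_eq_mul]
    simp only [Polynomial.coeff_ofNat_mul, coeff_X_pow]

  have hsum : ∀ m : ℕ, (∑ n ∈ c.support ∪ {m - 2, m - 1},
      c n * (ε n * (2 * (if m = n + 2 then (1:k) else 0)) + δ n * (if m = n + 1 then (1:k) else 0)))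
      = (X : k[X]).coeff m := by
    intro m
    rw [← hco m]
    symm
    apply Finset.sum_subset Finset.subset_union_left
    intro x _ hx
    rw [Finsupp.notMem_support_iff.mp hx]
    ring
  -- base case: coefficient of X^1
  have h0 : c 0 * δ 0 = 1 := by
    have h := hsum 1
    have hshr : (∑ n ∈ c.support ∪ {1 - 2, 1 - 1},
        c n * (ε n * (2 * (if 1 = n + 2 then (1:k) else 0)) + δ n * (if 1 = n + 1 then (1:k) else 0)))
        = ∑ n ∈ ({1 - 2, 1 - 1} : Finset ℕ),
        c n * (ε n * (2 * (if 1 = n + 2 then (1:k) else 0)) + δ n * (if 1 = n + 1 then (1:k) else 0)) := by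
      symm
      apply Finset.sum_subset Finset.subset_union_right
      intro x _ hx
      simp only [Finset.mem_insert, Finset.mem_singleton, not_or] at hx
      rw [if_neg (by omega), if_neg (by omega)]
      ring
    rw [hshr] at h
    norm_num at h
    exact h
  -- recurrence: coefficient of X^(n+2)
  have hrec : ∀ n : ℕ, c n * (ε n * 2) + c (n + 1) * δ (n + 1) = 0 := by
    intro n
    have h := hsum (n + 2)
    have hshr : (∑ m ∈ c.support ∪ {n + 2 - 2, n + 2 - 1},
        c m * (ε m * (2 * (if n + 2 = m + 2 then (1:k) else 0)) + δ m * (if n + 2 = m + 1 then (1:k) else 0)))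
        = ∑ m ∈ ({n + 2 - 2, n + 2 - 1} : Finset ℕ),
        c m * (ε m * (2 * (if n + 2 = m + 2 then (1:k) else 0)) + δ m * (if n + 2 = m + 1 then (1:k) else 0)) := by
      symm
      apply Finset.sum_subset Finset.subset_union_right
      intro x _ hx
      simp only [Finset.mem_insert, Finset.mem_singleton, not_or] at hx
      rw [if_neg (by omega), if_neg (by omega)]
      ring
    rw [hshr] at h
    have hpair : (n + 2 - 2 : ℕ) = n := by omega
    have hpair2 : (n + 2 - 1 : ℕ) = n + 1 := by omega
    rw [hpair, hpair2, Finset.sum_pair (by omega : n ≠ n + 1), coeff_X] at h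
    rw [if_pos rfl, if_neg (by omega : ¬n + 2 = n + 1),
      if_neg (by omega : ¬n + 2 = n + 1 + 2)] at h
    rw [if_neg (by omega : ¬1 = n + 2)] at h
    linear_combination h
  -- all coefficients nonzero
  have hne : ∀ n : ℕ, c n ≠ 0 := by
    intro n
    induction n with
    | zero => intro h; rw [h, zero_mul] at h0; exact zero_ne_one h0
    | succ n ih =>
      intro h
      have hr := hrec n
      rw [h, zero_mul, add_zero] at hr
      have hne2 : ε n * 2 ≠ 0 := by
        rcases hε n with he | he <;> rw [he] <;> norm_num
      exact ih ((mul_eq_zero.mp hr).resolve_right hne2)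
  obtain ⟨n, hn⟩ := Infinite.exists_notMem_finset c.support
  exact hne n (Finsupp.notMem_support_iff.mp hn)
end

section
/- Let k be a field of characteristic zero and let T = k⟨x, y⟩ be the free associative (tensor) algebra on two generators x and y. For arbitrary sign functions ε, δ, γ : ℕ × ℕ → {1, -1}, the element y does not lie in the k-linear span of the set { ε(m,n)·x^m y x^n + δ(m,n)·x^(m+1) y x^n + γ(m,n)·x^m y x^(n+1) : m, n ∈ ℕ }. (This is the computation showing that for the coassociative coalgebras C₁ ⊂ C₂, where C₂ is spanned by x, y, z = x⊗y + y⊗x with differential z ↦ y, the element corresponding to y survives in the homology of Ω_κ C₂, so the inclusion C₁ → C₂ is a weak equivalence in the β-model structure but not in the κ-model structure.) -/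
universe u

/-- Detect whether a word in `Fin 2` has the form `0^m 1 0^n`, returning `(m, n)`. -/
def detectWord : List (Fin 2) → Option (ℕ × ℕ)
  | [] => none
  | a :: t =>
    if a = 1 then (if t.all (· = 0) then some (0, t.length) else none)
    else (detectWord t).map (fun p => (p.1 + 1, p.2))

lemma toList_of_pow {α : Type*} (a : α) (m : ℕ) :
    FreeMonoid.toList (FreeMonoid.of a ^ m) = List.replicate m a := by
  induction m with
  | zero => rfl
  | succ m ih =>
    rw [pow_succ', FreeMonoid.toList_mul, ih, FreeMonoid.toList_of, List.replicate_succ]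
    rfl

lemma detectWord_eq (m n : ℕ) :
    detectWord (List.replicate m 0 ++ 1 :: List.replicate n 0) = some (m, n) := by
  induction m with
  | zero =>
    simp [detectWord, List.all_eq_true]
  | succ m ih =>
    have h01 : (0 : Fin 2) ≠ 1 := by decide
    simp [List.replicate_succ, detectWord, h01, ih]

/-- The coefficient function solving the sign recurrence. -/
def coeffFun (k : Type u) [Field k] (ε δ γ : ℕ × ℕ → k) : ℕ → ℕ → k
  | 0, 0 => 1
  | 0, _ + 1 => 0
  | m + 1, n =>
      -(ε (m, n) * coeffFun k ε δ γ m n + γ (m, n) * coeffFun k ε δ γ m (n + 1)) / δ (m, n)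

lemma coeffFun_rel (k : Type u) [Field k] (ε δ γ : ℕ × ℕ → k)
    (hδ : ∀ p, δ p ≠ 0) (m n : ℕ) :
    ε (m, n) * coeffFun k ε δ γ m n + δ (m, n) * coeffFun k ε δ γ (m + 1) n
      + γ (m, n) * coeffFun k ε δ γ m (n + 1) = 0 := by
  have h : coeffFun k ε δ γ (m + 1) n =
      -(ε (m, n) * coeffFun k ε δ γ m n + γ (m, n) * coeffFun k ε δ γ m (n + 1)) / δ (m, n) := by
    rfl
  rw [h, mul_comm (δ (m, n)), div_mul_cancel₀ _ (hδ (m, n))]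
  ring

/-- In the free associative algebra `k⟨x, y⟩` over a field of characteristic zero, for
arbitrary signs `ε(m,n), δ(m,n), γ(m,n) ∈ {1, -1}`, the generator `y` does not lie in
the `k`-linear span of the elements
`ε(m,n) • xᵐ y xⁿ + δ(m,n) • x^(m+1) y xⁿ + γ(m,n) • xᵐ y x^(n+1)`. -/
theorem y_not_mem_span_signs
    (k : Type u) [Field k] [CharZero k] (ε δ γ : ℕ × ℕ → k)
    (hε : ∀ p, ε p = 1 ∨ ε p = -1) (hδ : ∀ p, δ p = 1 ∨ δ p = -1)
    (hγ : ∀ p, γ p = 1 ∨ γ p = -1) :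
    letI x : FreeAlgebra k (Fin 2) := FreeAlgebra.ι k 0
    letI y : FreeAlgebra k (Fin 2) := FreeAlgebra.ι k 1
    y ∉ Submodule.span k
      (Set.range fun p : ℕ × ℕ =>
        ε p • (x ^ p.1 * y * x ^ p.2) + δ p • (x ^ (p.1 + 1) * y * x ^ p.2)
          + γ p • (x ^ p.1 * y * x ^ (p.2 + 1))) := by
  intro hmem
  set x : FreeAlgebra k (Fin 2) := FreeAlgebra.ι k 0 with hxdef
  set y : FreeAlgebra k (Fin 2) := FreeAlgebra.ι k 1 with hydef
  set c := coeffFun k ε δ γ with hc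
  -- the separating linear functional
  set f : FreeMonoid (Fin 2) → k :=
    fun w => ((detectWord w).map (fun p => c p.1 p.2)).getD 0 with hf
  set φ : FreeAlgebra k (Fin 2) →ₗ[k] k :=
    ((Finsupp.linearCombination k f).comp (MonoidAlgebra.coeffLinearEquiv k).toLinearMap).comp
      (FreeAlgebra.equivMonoidAlgebraFreeMonoid (R := k) (X := Fin 2)).toLinearMap with hφ
  have hδ0 : ∀ p, δ p ≠ 0 := by
    intro p
    rcases hδ p with h | h <;> rw [h] <;> norm_num
  -- value of φ on x^m * y * x^n
  have key : ∀ m n : ℕ, φ (x ^ m * y * x ^ n) = c m n := by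
    intro m n
    have hx : FreeAlgebra.equivMonoidAlgebraFreeMonoid (R := k) (X := Fin 2) x =
        MonoidAlgebra.single (FreeMonoid.of 0) 1 := by
      simp [hxdef, FreeAlgebra.equivMonoidAlgebraFreeMonoid, MonoidAlgebra.of_apply]
    have hy : FreeAlgebra.equivMonoidAlgebraFreeMonoid (R := k) (X := Fin 2) y =
        MonoidAlgebra.single (FreeMonoid.of 1) 1 := by
      simp [hydef, FreeAlgebra.equivMonoidAlgebraFreeMonoid, MonoidAlgebra.of_apply]
    have hword : (FreeMonoid.of (0 : Fin 2)) ^ m * FreeMonoid.of 1 * (FreeMonoid.of 0) ^ n =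
        FreeMonoid.ofList (List.replicate m 0 ++ 1 :: List.replicate n 0) := by
      apply FreeMonoid.toList.injective
      simp [toList_of_pow]
    have hsingle : FreeAlgebra.equivMonoidAlgebraFreeMonoid (R := k) (X := Fin 2)
        (x ^ m * y * x ^ n) =
        MonoidAlgebra.single
          (FreeMonoid.ofList (List.replicate m 0 ++ 1 :: List.replicate n 0)) 1 := by
      rw [map_mul, map_mul, map_pow, map_pow, hx, hy, MonoidAlgebra.single_pow,
        MonoidAlgebra.single_pow, MonoidAlgebra.single_mul_single,
        MonoidAlgebra.single_mul_single, one_pow, one_pow, one_mul, one_mul, hword]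
    show Finsupp.linearCombination k f (MonoidAlgebra.coeffLinearEquiv k
      (FreeAlgebra.equivMonoidAlgebraFreeMonoid (R := k) (X := Fin 2) (x ^ m * y * x ^ n))) = c m n
    rw [hsingle]
    erw [Finsupp.linearCombination_single]
    rw [one_smul]
    show ((detectWord (List.replicate m 0 ++ 1 :: List.replicate n 0)).map
      (fun p => c p.1 p.2)).getD 0 = c m n
    rw [detectWord_eq]
    rfl
  -- φ vanishes on the spanning set
  have hker : Submodule.span k
      (Set.range fun p : ℕ × ℕ =>
        ε p • (x ^ p.1 * y * x ^ p.2) + δ p • (x ^ (p.1 + 1) * y * x ^ p.2)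
          + γ p • (x ^ p.1 * y * x ^ (p.2 + 1))) ≤ LinearMap.ker φ := by
    rw [Submodule.span_le]
    rintro _ ⟨⟨m, n⟩, rfl⟩
    simp only [SetLike.mem_coe, LinearMap.mem_ker, map_add, map_smul, key, smul_eq_mul]
    exact coeffFun_rel k ε δ γ hδ0 m n
  have h0 : φ y = 0 := hker hmem
  have h1 : φ y = 1 := by
    have := key 0 0
    simpa [hc, coeffFun] using this
  rw [h0] at h1
  exact zero_ne_one h1
end
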